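/- Assume q > 2. Then the function k^× → ℂ, u ↦ Kl_u^{n;m}(ψ; (k₁,…,k_n; l₁,…,l_m), (χ₁,…,χ_n; η₁,…,η_m)), is not constant. (Proposition on Kloosterman sums, part (2).) -/

import Mathlib

open scoped BigOperators

/-- Sum over units equals sum over the field, when the function vanishes at `0`. -/
lemma sum_units_eq_aux {F : Type*} [Field F] [Fintype F] [DecidableEq F] {f : F → ℂ}
    (hf : f 0 = 0) : ∑ u : Fˣ, f ↑u = ∑ a : F, f a := by
  classical
  have h1 : ∑ u : Fˣ, f ↑u = ∑ a : {a : F // a ≠ 0}, f ↑a :=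
    Fintype.sum_equiv unitsEquivNeZero _ _ (fun u => rfl)
  have h2 : ∑ a : {a : F // a ≠ 0}, f ↑a = ∑ a ∈ Finset.univ.erase 0, f a :=
    (Finset.sum_subtype _ (fun x => by simp) f).symm
  rw [h1, h2, Finset.sum_erase _ hf]

/-- An additive character maps finite sums to products. -/
lemma addChar_map_sum {A M ι : Type*} [AddCommMonoid A] [CommMonoid M] (ψ : AddChar A M)
    (s : Finset ι) (f : ι → A) : ψ (∑ i ∈ s, f i) = ∏ i ∈ s, ψ (f i) := by
  classical
  induction s using Finset.induction_on with
  | empty => simp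
  | insert _ _ h ih => rw [Finset.sum_insert h, Finset.prod_insert h, AddChar.map_add_eq_mul, ih]

/-- A "Gauss sum" (over units) attached to a nontrivial additive character of a finite field
and an arbitrary multiplicative character is nonzero. -/
lemma gauss_sum_units_ne_zero {F : Type*} [Field F] [Fintype F] [DecidableEq F]
    {ψ : AddChar F ℂ} (hψ : ψ ≠ 1) (θ : MulChar F ℂ) :
    ∑ t : Fˣ, θ (t : F) * ψ (t : F) ≠ 0 := by
  have h0 : θ (0 : F) * ψ (0 : F) = 0 := by rw [MulChar.map_zero, zero_mul]
  rw [sum_units_eq_aux (f := fun a => θ a * ψ a) h0]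
  show gaussSum θ ψ ≠ 0
  rcases eq_or_ne θ 1 with rfl | h1
  · have hterm : ∀ a : F, (1 : MulChar F ℂ) a * ψ a = ψ a - if a = 0 then 1 else 0 := by
      intro a
      rcases eq_or_ne a 0 with rfl | ha
      · rw [MulChar.map_zero, zero_mul, AddChar.map_zero_eq_one, if_pos rfl, sub_self]
      · rw [MulChar.one_apply (isUnit_iff_ne_zero.mpr ha), one_mul, if_neg ha, sub_zero]
    have : gaussSum (1 : MulChar F ℂ) ψ = -1 := by
      unfold gaussSum
      rw [Finset.sum_congr rfl fun a _ => hterm a, Finset.sum_sub_distrib,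
        AddChar.sum_eq_zero_of_ne_one hψ, Finset.sum_ite_eq' Finset.univ (0 : F) (fun _ => (1 : ℂ)),
        if_pos (Finset.mem_univ _), zero_sub]
    rw [this]
    norm_num
  · exact gaussSum_ne_zero_of_nontrivial
      (by exact_mod_cast (Nat.cast_ne_zero (R := ℂ)).mpr Fintype.card_ne_zero)
      h1 (AddChar.IsPrimitive.of_ne_one hψ)

/-- Composition of a multiplicative character with the norm map of a finite field extension. -/
noncomputable def normMulChar {k k' : Type*} [Field k] [Field k'] [Algebra k k']
    [FiniteDimensional k k'] (θ : MulChar k ℂ) : MulChar k' ℂ where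
  toFun := fun y => θ (Algebra.norm k y)
  map_one' := by simp
  map_mul' := fun x y => by simp [map_mul]
  map_nonunit' := fun y hy => by
    have hy0 : y = 0 := by simpa [isUnit_iff_ne_zero, not_not] using hy
    subst hy0
    have h0 : Algebra.norm k (0 : k') = 0 := Algebra.norm_eq_zero_iff.mpr rfl
    show θ (Algebra.norm k (0 : k')) = 0
    rw [h0, MulChar.map_zero]

lemma normMulChar_apply {k k' : Type*} [Field k] [Field k'] [Algebra k k']
    [FiniteDimensional k k'] (θ : MulChar k ℂ) (y : k') :
    normMulChar θ y = θ (Algebra.norm k y) := rfl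

/-- The generalized Kloosterman sum
`Kl_u^{n;m}(ψ; (k₁,…,kₙ; l₁,…,l_m), (χ₁,…,χₙ; η₁,…,η_m))` attached to a finite field `k`,
a quadratic extension `k'` of `k` (with norm `Nr = Algebra.norm k` and trace
`Tr = Algebra.trace k k'`), a nontrivial additive character `ψ` of `k`, weights `kk`, `ll`,
and multiplicative characters `χs`, `ηs` of `k^×`. -/
noncomputable def Kl {k k' : Type*} [Field k] [Fintype k] [DecidableEq k]
    [Field k'] [Fintype k'] [DecidableEq k'] [Algebra k k']
    (ψ : AddChar k ℂ) {n m : ℕ} (kk : Fin n → ℕ) (ll : Fin m → ℕ)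
    (χs : Fin n → MulChar k ℂ) (ηs : Fin m → MulChar k ℂ) (u : kˣ) : ℂ :=
  ∑ x : Fin n → kˣ, ∑ y : Fin m → k'ˣ,
    if (∏ i, x i ^ kk i) * (∏ j, (Units.map (Algebra.norm k : k' →* k) (y j)) ^ ll j) = u then
      ψ (∑ i, ((x i : k))) * ψ (Algebra.trace k k' (∑ j, ((y j : k')))) *
        (∏ i, χs i ((x i : k))) * (∏ j, ηs j (Algebra.norm k ((y j : k'))))
    else 0

/-- **Non-constancy of generalized Kloosterman sums.**
If `q > 2`, the function `u ↦ Kl_u^{n;m}(ψ; (k₁,…,kₙ;l₁,…,l_m), (χ₁,…,χₙ;η₁,…,η_m))`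
on `k^×` is not constant. -/
theorem kloosterman_not_constant {k k' : Type*} [Field k] [Fintype k] [DecidableEq k]
    [Field k'] [Fintype k'] [DecidableEq k'] [Algebra k k']
    (h2 : Module.finrank k k' = 2)
    (hq : 2 < Fintype.card k)
    (ψ : AddChar k ℂ) (hψ : ∃ a : k, ψ a ≠ 1)
    {n m : ℕ} (kk : Fin n → ℕ) (hkk : ∀ i, 0 < kk i)
    (ll : Fin m → ℕ) (hll : ∀ j, 0 < ll j)
    (χs : Fin n → MulChar k ℂ) (ηs : Fin m → MulChar k ℂ) :
    ∃ u v : kˣ, Kl (k' := k') ψ kk ll χs ηs u ≠ Kl (k' := k') ψ kk ll χs ηs v := by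
  classical
  by_contra hcon
  push_neg at hcon
  -- instances for the extension k'/k
  haveI : FiniteDimensional k k' := FiniteDimensional.of_finrank_pos (by rw [h2]; norm_num)
  haveI : Algebra.IsSeparable k k' := inferInstance
  -- ψ is nontrivial
  obtain ⟨a₀, ha₀⟩ := hψ
  have hψ1 : ψ ≠ 1 := by
    intro h; exact ha₀ (by rw [h]; rfl)
  -- find a nontrivial multiplicative character χ of k
  have h1card : 1 < Fintype.card kˣ := by rw [Fintype.card_units]; omega
  haveI : Nontrivial kˣ := Fintype.one_lt_card_iff_nontrivial.mp h1card
  obtain ⟨a, ha⟩ := exists_ne (1 : kˣ)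
  haveI : NeZero ((Monoid.exponent kˣ : ℂ)) :=
    ⟨Nat.cast_ne_zero.mpr Monoid.exponent_ne_zero_of_finite⟩
  obtain ⟨χ, hχa⟩ := MulChar.exists_apply_ne_one_of_hasEnoughRootsOfUnity k ℂ
    (a := (a : k)) (fun h => ha (Units.ext h))
  have hχ1 : χ ≠ 1 := MulChar.ne_one_iff.mpr ⟨a, hχa⟩
  -- the additive character ψ' = ψ ∘ Tr of k'
  set ψ' : AddChar k' ℂ := ψ.compAddMonoidHom (Algebra.trace k k').toAddMonoidHom with hψ'def
  obtain ⟨b₀, hb₀⟩ := Algebra.trace_surjective k k' a₀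
  have hψ'1 : ψ' ≠ 1 := by
    intro h
    apply ha₀
    have : ψ' b₀ = 1 := by rw [h]; rfl
    rwa [hψ'def, AddChar.compAddMonoidHom_apply, LinearMap.toAddMonoidHom_coe, hb₀] at this
  -- the factors
  set g : Fin n → kˣ → ℂ := fun i t => (χs i * χ ^ kk i) (t : k) * ψ (t : k) with hg
  set h : Fin m → k'ˣ → ℂ := fun j z => (normMulChar (ηs j * χ ^ ll j)) (z : k') * ψ' (z : k')
    with hh
  -- the weighted sum is zero since Kl is constant
  have hS0 : ∑ u : kˣ, χ ↑u * Kl (k' := k') ψ kk ll χs ηs u = 0 := by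
    have : ∀ u : kˣ, χ ↑u * Kl (k' := k') ψ kk ll χs ηs u
        = χ ↑u * Kl (k' := k') ψ kk ll χs ηs 1 := fun u => by rw [hcon u 1]
    rw [Finset.sum_congr rfl fun u _ => this u, ← Finset.sum_mul]
    have hz : ∑ u : kˣ, χ (u : k) = 0 := by
      rw [sum_units_eq_aux (MulChar.map_zero χ)]
      exact MulChar.sum_eq_zero_of_ne_one hχ1
    rw [hz, zero_mul]
  -- the weighted sum factors as a product of Gauss sums
  have key : ∑ u : kˣ, χ ↑u * Kl (k' := k') ψ kk ll χs ηs u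
      = (∏ i, ∑ t : kˣ, g i t) * (∏ j, ∑ z : k'ˣ, h j z) := by
    calc ∑ u : kˣ, χ ↑u * Kl (k' := k') ψ kk ll χs ηs u
        = ∑ u : kˣ, ∑ x : Fin n → kˣ, ∑ y : Fin m → k'ˣ,
            if (∏ i, x i ^ kk i) * (∏ j, (Units.map (Algebra.norm k : k' →* k) (y j)) ^ ll j)
                = u then
              χ ↑u * (ψ (∑ i, ((x i : k))) * ψ (Algebra.trace k k' (∑ j, ((y j : k')))) *
                (∏ i, χs i ((x i : k))) * (∏ j, ηs j (Algebra.norm k ((y j : k')))))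
            else 0 := by
          simp only [Kl, Finset.mul_sum, mul_ite, mul_zero]
      _ = ∑ x : Fin n → kˣ, ∑ y : Fin m → k'ˣ, ∑ u : kˣ,
            if (∏ i, x i ^ kk i) * (∏ j, (Units.map (Algebra.norm k : k' →* k) (y j)) ^ ll j)
                = u then
              χ ↑u * (ψ (∑ i, ((x i : k))) * ψ (Algebra.trace k k' (∑ j, ((y j : k')))) *
                (∏ i, χs i ((x i : k))) * (∏ j, ηs j (Algebra.norm k ((y j : k')))))
            else 0 := by
          rw [Finset.sum_comm]
          exact Finset.sum_congr rfl fun x _ => Finset.sum_comm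
      _ = ∑ x : Fin n → kˣ, ∑ y : Fin m → k'ˣ,
            (∏ i, g i (x i)) * (∏ j, h j (y j)) := by
          refine Finset.sum_congr rfl fun x _ => Finset.sum_congr rfl fun y _ => ?_
          rw [Finset.sum_ite_eq Finset.univ
            ((∏ i, x i ^ kk i) * (∏ j, (Units.map (Algebra.norm k : k' →* k) (y j)) ^ ll j))
            (fun u => χ ↑u * (ψ (∑ i, ((x i : k))) *
              ψ (Algebra.trace k k' (∑ j, ((y j : k')))) *
              (∏ i, χs i ((x i : k))) * (∏ j, ηs j (Algebra.norm k ((y j : k')))))),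
            if_pos (Finset.mem_univ _)]
          -- now a pointwise computation
          have hcoe : ((((∏ i, x i ^ kk i) *
              (∏ j, (Units.map (Algebra.norm k : k' →* k) (y j)) ^ ll j)) : kˣ) : k)
              = (∏ i, ((x i : k)) ^ kk i) * ∏ j, (Algebra.norm k ((y j : k'))) ^ ll j := by
            simp [Units.val_mul, Units.coe_prod, Units.val_pow_eq_pow_val]
          rw [hcoe, map_mul, map_prod, map_prod]
          simp only [map_pow]
          have htr : ψ (Algebra.trace k k' (∑ j, ((y j : k'))))
              = ∏ j, ψ' ((y j : k')) := by
            rw [map_sum, addChar_map_sum]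
            rfl
          rw [addChar_map_sum, htr]
          simp only [hg, hh, MulChar.mul_apply, normMulChar_apply,
            MulChar.pow_apply_coe]
          have hpow : ∀ j, (χ ^ ll j) (Algebra.norm k ((y j : k')))
              = χ (Algebra.norm k ((y j : k'))) ^ ll j :=
            fun j => MulChar.pow_apply' χ (hll j).ne' _
          simp only [hpow]
          rw [Finset.prod_mul_distrib, Finset.prod_mul_distrib, Finset.prod_mul_distrib,
            Finset.prod_mul_distrib]
          ring
      _ = (∑ x : Fin n → kˣ, ∏ i, g i (x i)) * (∑ y : Fin m → k'ˣ, ∏ j, h j (y j)) := by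
          rw [Finset.sum_mul_sum]
      _ = (∏ i, ∑ t : kˣ, g i t) * (∏ j, ∑ z : k'ˣ, h j z) := by
          rw [Fintype.prod_sum, Fintype.prod_sum]
  -- but each Gauss sum is nonzero: contradiction
  rw [hS0] at key
  refine mul_ne_zero ?_ ?_ key.symm
  · exact Finset.prod_ne_zero_iff.mpr fun i _ => gauss_sum_units_ne_zero hψ1 _
  · exact Finset.prod_ne_zero_iff.mpr fun j _ => gauss_sum_units_ne_zero hψ'1 _
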